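/- arXiv:2407.11364 — 6 statements merged into one kernel-verified Lean document; each statement's English description precedes it below -/
import Mathlib

section
/- Let G be a simple graph on a finite vertex set V and let I* ⊆ V be an independent set of G with |I*| ≥ 50 · |V ∖ I*|. Let U ⊆ V be a 2-approximate vertex cover of G, i.e., U is a vertex cover of G and |U| ≤ 2 · |W| for every vertex cover W of G. Then V ∖ U is an independent set of G and |V ∖ U| ≥ (49/50) · |I*|. -/
open Finset
open scoped Classical

/-- If `Istar` is an independent set of `G` with
`|Istar| ≥ 50 * |V \ Istar|` and `U` is a 2-approximate vertex cover of `G`, then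
`V \ U` is an independent set with `|V \ U| ≥ (49/50) * |Istar|`. -/
theorem complement_of_two_approx_vertex_cover
    (V : Type*) [Fintype V] [DecidableEq V] (G : SimpleGraph V)
    (Istar U : Finset V)
    (hIstar : ∀ u ∈ Istar, ∀ v ∈ Istar, ¬ G.Adj u v)
    (hsize : 50 * (Finset.univ \ Istar).card ≤ Istar.card)
    (hUcover : ∀ u v : V, G.Adj u v → u ∈ U ∨ v ∈ U)
    (hUapprox : ∀ W : Finset V, (∀ u v : V, G.Adj u v → u ∈ W ∨ v ∈ W) →
      U.card ≤ 2 * W.card) :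
    (∀ u ∈ Finset.univ \ U, ∀ v ∈ Finset.univ \ U, ¬ G.Adj u v) ∧
      (49 / 50 : ℝ) * Istar.card ≤ ((Finset.univ \ U).card : ℝ) := by
  constructor
  · intro u hu v hv hadj
    rcases hUcover u v hadj with h | h
    · exact (Finset.mem_sdiff.mp hu).2 h
    · exact (Finset.mem_sdiff.mp hv).2 h
  · -- W = univ \ Istar is a vertex cover
    have hWcover : ∀ u v : V, G.Adj u v → u ∈ Finset.univ \ Istar ∨ v ∈ Finset.univ \ Istar := by
      intro u v hadj
      by_contra h
      push_neg at h
      have hu : u ∈ Istar := by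
        have := h.1; simp [Finset.mem_sdiff] at this; exact this
      have hv : v ∈ Istar := by
        have := h.2; simp [Finset.mem_sdiff] at this; exact this
      exact hIstar u hu v hv hadj
    have hU : U.card ≤ 2 * (Finset.univ \ Istar).card := hUapprox _ hWcover
    have hIle : Istar.card ≤ Fintype.card V := by
      simpa using Finset.card_le_card (Finset.subset_univ Istar)
    have hUuniv : U.card ≤ Fintype.card V := by
      simpa using Finset.card_le_card (Finset.subset_univ U)
    have hcardsub : (Finset.univ \ U).card = Fintype.card V - U.card := by
      simp [Finset.card_sdiff_of_subset (Finset.subset_univ U)]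
    have h50 : (50 : ℝ) * ((Finset.univ \ Istar).card : ℝ) ≤ (Istar.card : ℝ) := by
      exact_mod_cast hsize
    have hUr : (U.card : ℝ) ≤ 2 * ((Finset.univ \ Istar).card : ℝ) := by exact_mod_cast hU
    have hIr : (Istar.card : ℝ) ≤ (Fintype.card V : ℝ) := by exact_mod_cast hIle
    have hVU : ((Finset.univ \ U).card : ℝ) = (Fintype.card V : ℝ) - (U.card : ℝ) := by
      rw [hcardsub]
      push_cast [Nat.cast_sub hUuniv]
      ring
    have hsum : (Fintype.card V : ℝ) = (Istar.card : ℝ) + ((Finset.univ \ Istar).card : ℝ) := by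
      have : (Finset.univ \ Istar).card = Fintype.card V - Istar.card := by
        simp [Finset.card_sdiff_of_subset (Finset.subset_univ Istar)]
      rw [this]
      push_cast [Nat.cast_sub hIle]
      ring
    rw [hVU]
    nlinarith
end

section
/- Let n ≥ 2 be a natural number, let ε be a real number with 0 < ε ≤ 1/4, and let d, k be natural numbers with 1 ≤ k ≤ d and k ≥ (3/ε) · √(d · ln n). Let X_1, …, X_k be i.i.d. Bernoulli(1/2 + ε) random variables, let Y_1, …, Y_{d−k} be i.i.d. Bernoulli(1/2 − ε) random variables, with the whole family of d variables mutually independent, and set S = Σ_{i=1}^k X_i + Σ_{j=1}^{d−k} Y_j. Then Pr[ S ≤ (1/2 − ε)·d + 6·(1/2 − ε)·√(d · ln n) ] ≤ n^{−3}. -/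
open MeasureTheory ProbabilityTheory Real
open scoped ENNReal

lemma exp_le_quad {t : ℝ} (ht : t ≤ 0) : Real.exp t ≤ 1 + t + t ^ 2 / 2 := by
  set f : ℝ → ℝ := fun x => 1 + x + x ^ 2 / 2 - Real.exp x with hf
  have hder : ∀ x : ℝ, HasDerivAt f (1 + x - Real.exp x) x := by
    intro x
    have h1 : HasDerivAt (fun x : ℝ => 1 + x + x ^ 2 / 2) (1 + x) x := by
      have := ((hasDerivAt_id x).const_add (1:ℝ)).add ((hasDerivAt_pow 2 x).div_const 2)
      exact this.congr_deriv (by norm_num)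
    exact h1.sub (Real.hasDerivAt_exp x)
  have hanti : AntitoneOn f (Set.Iic (0:ℝ)) := by
    refine antitoneOn_of_deriv_nonpos (convex_Iic 0) ?_ ?_ ?_
    · exact (Continuous.continuousOn (by continuity))
    · intro x _; exact (hder x).differentiableAt.differentiableWithinAt
    · intro x _
      rw [(hder x).deriv]
      have := Real.add_one_le_exp x
      linarith
  have h0 : f 0 ≤ f t := hanti ht Set.self_mem_Iic ht
  simp only [hf, Real.exp_zero] at h0
  linarith

lemma mgf_bernoulli_le {Ω : Type*} [MeasurableSpace Ω] (μ : Measure Ω) [IsProbabilityMeasure μ]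
    (Z : Ω → ℝ) (hZ : Measurable Z) (h01 : ∀ ω, Z ω = 0 ∨ Z ω = 1) {p : ℝ}
    (hp0 : 0 ≤ p) (hp1 : p ≤ 1)
    (hμ : μ {ω | Z ω = 1} = ENNReal.ofReal p) {t : ℝ} (ht : t ≤ 0) :
    mgf Z μ t ≤ Real.exp (p * t + t ^ 2 / 2) := by
  have hset : MeasurableSet {ω | Z ω = 1} := hZ (measurableSet_singleton 1)
  have key : (fun ω => Real.exp (t * Z ω))
      = fun ω => Set.indicator {ω | Z ω = 1} (fun _ => Real.exp t - 1) ω + 1 := by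
    funext ω
    rcases h01 ω with h | h
    · rw [Set.indicator_of_notMem (by simp [Set.mem_setOf_eq, h])]
      simp [h]
    · rw [Set.indicator_of_mem (by simp [Set.mem_setOf_eq, h])]
      simp [h]
  have hmgf : mgf Z μ t = p * (Real.exp t - 1) + 1 := by
    rw [mgf, key, integral_add ((integrable_const _).indicator hset) (integrable_const 1),
      integral_indicator_const _ hset, integral_const, measureReal_def, hμ,
      ENNReal.toReal_ofReal hp0]
    simp [mul_comm]
  have h1 : 0 ≤ Real.exp t - 1 - t := by have := Real.add_one_le_exp t; linarith
  have h2 : Real.exp t - 1 - t ≤ t ^ 2 / 2 := by have := exp_le_quad ht; linarith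
  have h3 : p * (Real.exp t - 1) + 1 ≤ Real.exp (p * (Real.exp t - 1)) :=
    Real.add_one_le_exp _
  rw [hmgf]
  refine h3.trans (Real.exp_le_exp.mpr ?_)
  nlinarith [mul_le_mul_of_nonneg_left h2 hp0, mul_le_mul_of_nonneg_right hp1 (by positivity : (0:ℝ) ≤ t ^ 2 / 2), mul_le_mul_of_nonneg_left h1 hp0]
/-- For `n ≥ 2`, `0 < ε ≤ 1/4`, `1 ≤ k ≤ d` with
`k ≥ (3/ε)·√(d · ln n)`, and a mutually independent family of `d` Bernoulli random
variables of which the first `k` have mean `1/2 + ε` and the remaining `d - k` have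
mean `1/2 - ε`, the probability that their sum is at most
`(1/2 - ε)·d + 6·(1/2 - ε)·√(d · ln n)` is at most `n⁻³`. -/
theorem bernoulli_sum_lower_tail_nonmis_vertex
    (Ω : Type*) [MeasurableSpace Ω] (μ : Measure Ω) [IsProbabilityMeasure μ]
    (n : ℕ) (hn : 2 ≤ n) (ε : ℝ) (hε0 : 0 < ε) (hε : ε ≤ 1 / 4)
    (d k : ℕ) (hk1 : 1 ≤ k) (hkd : k ≤ d)
    (hk : (3 / ε) * Real.sqrt (d * Real.log n) ≤ (k : ℝ))
    (Z : Fin d → Ω → ℝ)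
    (hmeas : ∀ i, Measurable (Z i))
    (h01 : ∀ i ω, Z i ω = 0 ∨ Z i ω = 1)
    (hBerHigh : ∀ i : Fin d, (i : ℕ) < k →
      μ {ω | Z i ω = 1} = ENNReal.ofReal (1 / 2 + ε))
    (hBerLow : ∀ i : Fin d, k ≤ (i : ℕ) →
      μ {ω | Z i ω = 1} = ENNReal.ofReal (1 / 2 - ε))
    (hind : iIndepFun Z μ) :
    μ {ω | ∑ i, Z i ω
        ≤ (1 / 2 - ε) * d + 6 * (1 / 2 - ε) * Real.sqrt (d * Real.log n)}
      ≤ ((n : ℝ≥0∞) ^ 3)⁻¹ := by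
  have hn0 : (0:ℝ) < n := by positivity
  have hlogn : 0 < Real.log n := Real.log_pos (by exact_mod_cast hn)
  have hd1 : 1 ≤ d := le_trans hk1 hkd
  have hdpos : (0:ℝ) < d := by exact_mod_cast hd1
  set L : ℝ := Real.sqrt (d * Real.log n) with hLdef
  have hL2 : L ^ 2 = d * Real.log n := Real.sq_sqrt (by positivity)
  have hLpos : 0 < L := Real.sqrt_pos.mpr (by positivity)
  have hkL : 6 * L ≤ 2 * ε * k := by
    have := mul_le_mul_of_nonneg_left hk (by positivity : (0:ℝ) ≤ 2 * ε)
    calc 6 * L = 2 * ε * (3 / ε * L) := by field_simp; ring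
    _ ≤ 2 * ε * k := this
  set p : Fin d → ℝ := fun i => if (i : ℕ) < k then 1/2 + ε else 1/2 - ε with hpdef
  set m : ℝ := ∑ i, p i with hmdef
  have hm : m = (1/2 - ε) * d + 2 * ε * k := by
    rw [hmdef, hpdef, Fin.sum_univ_eq_sum_range (fun i => if i < k then 1/2 + ε else 1/2 - ε) d,
      ← Finset.sum_range_add_sum_Ico _ hkd]
    rw [Finset.sum_congr rfl (fun i hi => if_pos (Finset.mem_range.mp hi)),
      Finset.sum_congr rfl (fun i hi => if_neg (not_lt.mpr (Finset.mem_Ico.mp hi).1)),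
      Finset.sum_const, Finset.sum_const, Finset.card_range, Nat.card_Ico]
    have : ((d - k : ℕ) : ℝ) = (d : ℝ) - k := by
      rw [Nat.cast_sub hkd]
    simp only [nsmul_eq_mul, this]
    ring
  set a : ℝ := (1/2 - ε) * d + 6 * (1/2 - ε) * L with hadef
  set g : ℝ := m - a with hgdef
  have hg3 : 3 * L ≤ g := by
    rw [hgdef, hm, hadef]
    nlinarith [hLpos.le]
  have hgpos : 0 < g := lt_of_lt_of_le (by linarith) hg3
  set t : ℝ := -(g / d) with htdef
  have ht : t ≤ 0 := by rw [htdef]; exact neg_nonpos.mpr (by positivity)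
  -- integrability
  have hbd : ∀ (X : Ω → ℝ), Measurable X → (∀ ω, 0 ≤ X ω) →
      Integrable (fun ω => Real.exp (t * X ω)) μ := by
    intro X hX hX0
    refine Integrable.mono' (integrable_const 1) ((hX.const_mul t).exp.aestronglyMeasurable)
      (ae_of_all _ fun ω => ?_)
    rw [Real.norm_eq_abs, abs_of_pos (Real.exp_pos _)]
    calc Real.exp (t * X ω) ≤ Real.exp 0 :=
      Real.exp_le_exp.mpr (mul_nonpos_of_nonpos_of_nonneg ht (hX0 ω))
    _ = 1 := Real.exp_zero
  have hZ0 : ∀ i ω, 0 ≤ Z i ω := fun i ω => by rcases h01 i ω with h | h <;> simp [h]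
  have hSmeas : Measurable (∑ i, Z i) := by
    rw [Finset.sum_fn]
    exact Finset.measurable_sum _ fun i _ => hmeas i
  have hSint : Integrable (fun ω => Real.exp (t * (∑ i, Z i) ω)) μ := by
    refine hbd _ hSmeas fun ω => ?_
    rw [Finset.sum_apply]
    exact Finset.sum_nonneg fun i _ => hZ0 i ω
  -- Chernoff
  have hcher := measure_le_le_exp_mul_mgf (μ := μ) (X := ∑ i, Z i) a ht hSint
  have hmgf_sum : mgf (∑ i, Z i) μ t = ∏ i, mgf (Z i) μ t := hind.mgf_sum hmeas Finset.univ
  have hmgf_i : ∀ i : Fin d, mgf (Z i) μ t ≤ Real.exp (p i * t + t ^ 2 / 2) := by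
    intro i
    by_cases hik : (i : ℕ) < k
    · exact mgf_bernoulli_le μ (Z i) (hmeas i) (h01 i)
        (by simp only [hpdef, if_pos hik]; linarith)
        (by simp only [hpdef, if_pos hik]; linarith)
        (by simp only [hpdef, if_pos hik]; exact hBerHigh i hik) ht
    · exact mgf_bernoulli_le μ (Z i) (hmeas i) (h01 i)
        (by simp only [hpdef, if_neg hik]; linarith)
        (by simp only [hpdef, if_neg hik]; linarith)
        (by simp only [hpdef, if_neg hik]; exact hBerLow i (not_lt.mp hik)) ht
  have hprod : ∏ i, mgf (Z i) μ t ≤ Real.exp (m * t + d * (t ^ 2 / 2)) := by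
    calc ∏ i, mgf (Z i) μ t ≤ ∏ i, Real.exp (p i * t + t ^ 2 / 2) :=
      Finset.prod_le_prod (fun i _ => mgf_nonneg) (fun i _ => hmgf_i i)
    _ = Real.exp (∑ i, (p i * t + t ^ 2 / 2)) := (Real.exp_sum _ _).symm
    _ = Real.exp (m * t + d * (t ^ 2 / 2)) := by
        congr 1
        rw [Finset.sum_add_distrib, ← Finset.sum_mul, ← hmdef, Finset.sum_const,
          Finset.card_univ, Fintype.card_fin, nsmul_eq_mul]
  have hexp_eq : -t * a + (m * t + d * (t ^ 2 / 2)) = -(g ^ 2 / (2 * d)) := by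
    rw [htdef, hgdef]
    field_simp
    ring
  have hmain : (μ {ω | (∑ i, Z i) ω ≤ a}).toReal ≤ Real.exp (-(g ^ 2 / (2 * d))) := by
    calc (μ {ω | (∑ i, Z i) ω ≤ a}).toReal ≤ Real.exp (-t * a) * mgf (∑ i, Z i) μ t := hcher
    _ ≤ Real.exp (-t * a) * Real.exp (m * t + d * (t ^ 2 / 2)) := by
        exact mul_le_mul_of_nonneg_left (hmgf_sum ▸ hprod) (Real.exp_pos _).le
    _ = Real.exp (-t * a + (m * t + d * (t ^ 2 / 2))) := (Real.exp_add _ _).symm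
    _ = Real.exp (-(g ^ 2 / (2 * d))) := by rw [hexp_eq]
  have htail : Real.exp (-(g ^ 2 / (2 * d))) ≤ ((n:ℝ) ^ 3)⁻¹ := by
    have h9 : 9 * (d * Real.log n) ≤ g ^ 2 := by
      calc 9 * ((d:ℝ) * Real.log n) = (3 * L) * (3 * L) := by rw [← hL2]; ring
      _ ≤ g * g := mul_self_le_mul_self (by positivity) hg3
      _ = g ^ 2 := (sq g).symm
    have hexple : Real.exp (-(g ^ 2 / (2 * d))) ≤ Real.exp (-(3 * Real.log n)) := by
      apply Real.exp_le_exp.mpr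
      rw [neg_le_neg_iff, le_div_iff₀ (by positivity : (0:ℝ) < 2 * d),
        show 3 * Real.log n * (2 * (d:ℝ)) = 6 * ((d:ℝ) * Real.log n) by ring]
      linarith [(mul_pos hdpos hlogn).le]
    refine hexple.trans_eq ?_
    rw [Real.exp_neg, show (3:ℝ) * Real.log n = Real.log n + Real.log n + Real.log n by ring,
      Real.exp_add, Real.exp_add, Real.exp_log hn0]
    ring
  -- wrap up in ENNReal
  have hset_eq : {ω | ∑ i, Z i ω ≤ (1 / 2 - ε) * d + 6 * (1 / 2 - ε) * L}
      = {ω | (∑ i, Z i) ω ≤ a} := by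
    ext ω; simp [hadef, Finset.sum_apply]
  rw [hset_eq]
  have hrhs : ((n : ℝ≥0∞) ^ 3)⁻¹ = ENNReal.ofReal (((n:ℝ) ^ 3)⁻¹) := by
    rw [ENNReal.ofReal_inv_of_pos (by positivity), ENNReal.ofReal_pow (by positivity),
      ENNReal.ofReal_natCast]
  rw [hrhs]
  exact (ENNReal.le_ofReal_iff_toReal_le (measure_ne_top μ _) (by positivity)).mpr
    (hmain.trans htail)
end

section
/- Let ε be a real number with 0 < ε ≤ 1/2, let δ ∈ (0, 1), let r ≥ 1 be a natural number, and let q be a natural number with q ≥ (4/ε²) · (r + ln(1/δ)). Let X_1, …, X_q be i.i.d. Bernoulli(1/2 + ε) random variables. Then Pr[ Σ_{i=1}^q X_i < q/2 ] ≤ (1/100) · δ / 4^r. -/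
open MeasureTheory ProbabilityTheory
open scoped ENNReal

set_option maxHeartbeats 1000000 in
/-- For `0 < ε ≤ 1/2`, `δ ∈ (0,1)`, `r ≥ 1`,
`q ≥ (4/ε²)·(r + ln(1/δ))`, and i.i.d. `Bernoulli(1/2 + ε)` random variables
`X_1, …, X_q`, the probability that their sum is less than `q/2` is at most
`(1/100)·δ/4^r`. -/
theorem elimination_round_mis_vertex_removed
    (Ω : Type*) [MeasurableSpace Ω] (μ : Measure Ω) [IsProbabilityMeasure μ]
    (ε : ℝ) (hε0 : 0 < ε) (hε : ε ≤ 1 / 2)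
    (δ : ℝ) (hδ0 : 0 < δ) (hδ1 : δ < 1)
    (r : ℕ) (hr : 1 ≤ r)
    (q : ℕ) (hq : (4 / ε ^ 2) * (r + Real.log (1 / δ)) ≤ (q : ℝ))
    (X : Fin q → Ω → ℝ)
    (hmeas : ∀ i, Measurable (X i))
    (h01 : ∀ i ω, X i ω = 0 ∨ X i ω = 1)
    (hBer : ∀ i, μ {ω | X i ω = 1} = ENNReal.ofReal (1 / 2 + ε))
    (hind : iIndepFun X μ) :
    μ {ω | ∑ i, X i ω < (q : ℝ) / 2}
      ≤ ENNReal.ofReal ((1 / 100) * δ / 4 ^ r) := by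
  classical
  set lam : ℝ := (1 - 2*ε + ε^3) / (1 + 2*ε) with hlam_def
  have hnum : 0 < 1 - 2*ε + ε^3 := by nlinarith [pow_pos hε0 3]
  have hden : 0 < 1 + 2*ε := by linarith
  have hlam0 : 0 < lam := div_pos hnum hden
  have hlam1 : lam ≤ 1 := by
    rw [div_le_one hden]; nlinarith [pow_pos hε0 3, pow_le_pow_left₀ hε0.le hε 3]
  set t : ℝ := Real.log lam with ht_def
  have ht0 : t ≤ 0 := Real.log_nonpos hlam0.le hlam1
  have hexpt : Real.exp t = lam := Real.exp_log hlam0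
  set c : ℝ := 1 - 2*ε + ε^3/2 with hc_def
  have hc0 : 0 < c := by
    rw [hc_def]; nlinarith [pow_pos hε0 3]
  -- mgf of each X i
  have hmgf : ∀ i, mgf (X i) μ t = c := by
    intro i
    have hS : MeasurableSet {ω | X i ω = 1} :=
      (hmeas i) (measurableSet_singleton 1)
    have heq : (fun ω => Real.exp (t * X i ω))
        = fun ω => ({ω | X i ω = 1}).indicator (fun _ => Real.exp t - 1) ω + 1 := by
      funext ω
      rcases h01 i ω with h | h
      · have hmem : ω ∉ {ω | X i ω = 1} := by simp [h]
        simp [h, Set.indicator_of_notMem hmem]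
      · have hmem : ω ∈ {ω | X i ω = 1} := by simp [h]
        simp [h, Set.indicator_of_mem hmem]
    have hint : Integrable (({ω | X i ω = 1}).indicator (fun _ => Real.exp t - 1)) μ :=
      (integrable_const _).indicator hS
    rw [mgf, heq, integral_add hint (integrable_const 1),
      integral_indicator_const _ hS, integral_const,
      measureReal_def, hBer i, ENNReal.toReal_ofReal (by linarith)]
    have hlamval : (1/2 + ε) * Real.exp t = (1 - 2*ε + ε^3)/2 := by
      rw [hexpt, hlam_def]
      field_simp
    simp only [smul_eq_mul, measureReal_def, measure_univ, ENNReal.toReal_one]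
    nlinarith [hlamval]
  -- integrability of each exp(t * X i ·)
  have hint_i : ∀ i, Integrable (fun ω => Real.exp (t * X i ω)) μ := by
    intro i
    refine (integrable_const (1:ℝ)).mono'
      (((hmeas i).const_mul t).exp).aestronglyMeasurable
      (Filter.Eventually.of_forall fun ω => ?_)
    rw [Real.norm_eq_abs, abs_of_pos (Real.exp_pos _), ← Real.exp_zero]
    apply Real.exp_le_exp.2
    rcases h01 i ω with h | h <;> simp [h] <;> nlinarith
  have hint_sum : Integrable (fun ω => Real.exp (t * (∑ i, X i) ω)) μ :=
    hind.integrable_exp_mul_sum hmeas (fun i _ => hint_i i)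
  -- Chernoff bound
  have hcher := measure_le_le_exp_mul_mgf (X := ∑ i, X i) (μ := μ) (t := t)
      ((q:ℝ)/2) ht0 hint_sum
  rw [hind.mgf_sum hmeas] at hcher
  simp only [hmgf, Finset.prod_const, Finset.card_univ, Fintype.card_fin] at hcher
  set L : ℝ := Real.exp (-t * ((q:ℝ)/2)) * c ^ q with hL_def
  have hL0 : 0 ≤ L := mul_nonneg (Real.exp_pos _).le (pow_nonneg hc0.le q)
  set M : ℝ := Real.exp (-(3/2) * (q:ℝ) * ε^2) with hM_def
  have hM0 : 0 < M := Real.exp_pos _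
  -- key polynomial fact : c^2 / lam ≤ 1 - 3 ε^2
  have hB : c^2 / lam ≤ 1 - 3*ε^2 := by
    rw [div_le_iff₀ hlam0]
    have hlr : (1 - 3*ε^2) * lam = ((1 - 3*ε^2) * (1 - 2*ε + ε^3)) / (1 + 2*ε) := by
      rw [hlam_def]; ring
    rw [hlr, hc_def, le_div_iff₀ hden]
    nlinarith [mul_nonneg (sq_nonneg ε) (by linarith : (0:ℝ) ≤ 1 - 2*ε),
      mul_nonneg (pow_nonneg hε0.le 5) (by nlinarith : (0:ℝ) ≤ 1 - ε/4 - ε^2/2)]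
  have hBnn : 0 ≤ c^2 / lam := div_nonneg (sq_nonneg c) hlam0.le
  have hB' : c^2 / lam ≤ Real.exp (-(3*ε^2)) := by
    refine hB.trans ?_
    have := Real.add_one_le_exp (-(3*ε^2))
    linarith
  -- L ≤ M
  have hLM : L ≤ M := by
    rw [← pow_le_pow_iff_left₀ hL0 hM0.le (two_ne_zero)]
    have e1 : L^2 = (c^2 / lam)^q := by
      rw [hL_def, mul_pow, ← pow_mul, mul_comm q 2, pow_mul, ← Real.exp_nat_mul]
      rw [show ((2:ℕ):ℝ) * (-t * ((q:ℝ)/2)) = (q:ℝ) * (-t) by push_cast; ring]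
      rw [Real.exp_nat_mul, Real.exp_neg, hexpt, div_pow]
      rw [div_eq_mul_inv, ← inv_pow, mul_comm]
    have e2 : M^2 = (Real.exp (-(3*ε^2)))^q := by
      rw [hM_def, ← Real.exp_nat_mul, ← Real.exp_nat_mul]
      congr 1
      push_cast; ring
    rw [e1, e2]
    exact pow_le_pow_left₀ hBnn hB' q
  -- arithmetic: M ≤ (1/100) * δ / 4^r
  have hq2 : 4 * ((r:ℝ) + Real.log (1/δ)) ≤ (q:ℝ) * ε^2 := by
    have hε2 : 0 < ε^2 := pow_pos hε0 2
    have := mul_le_mul_of_nonneg_right hq hε2.le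
    calc 4 * ((r:ℝ) + Real.log (1/δ))
        = (4 / ε^2) * ((r:ℝ) + Real.log (1/δ)) * ε^2 := by field_simp
      _ ≤ (q:ℝ) * ε^2 := this
  have hlogδ : Real.log (1/δ) = - Real.log δ := by
    rw [one_div, Real.log_inv]
  have hMle : M ≤ Real.exp (-6) ^ r * δ ^ 6 := by
    have : -(3/2) * (q:ℝ) * ε^2 ≤ (r:ℝ) * (-6) + (6:ℕ) * Real.log δ := by
      rw [hlogδ] at hq2
      push_cast
      nlinarith
    calc M ≤ Real.exp ((r:ℝ) * (-6) + (6:ℕ) * Real.log δ) := Real.exp_le_exp.2 this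
      _ = Real.exp (-6) ^ r * δ ^ 6 := by
          rw [Real.exp_add, Real.exp_nat_mul, Real.exp_nat_mul, Real.exp_log hδ0]
  have hexp6 : (400:ℝ) ≤ Real.exp 6 := by
    have h1 : (2.7182818283:ℝ) < Real.exp 1 := Real.exp_one_gt_d9
    have h2 : (400:ℝ) < (2.7182818283:ℝ)^6 := by norm_num
    have h3 : (2.7182818283:ℝ)^6 ≤ Real.exp 1 ^ 6 :=
      pow_le_pow_left₀ (by norm_num) h1.le 6
    have h4 : Real.exp 1 ^ 6 = Real.exp 6 := by
      rw [Real.exp_one_pow]; norm_num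
    linarith
  have hsmall : Real.exp (-6) * 4 ≤ 1/100 := by
    rw [Real.exp_neg]
    have h6 : 0 < Real.exp 6 := Real.exp_pos 6
    rw [inv_mul_le_iff₀ h6]
    linarith
  have hpow : Real.exp (-6) ^ r ≤ (1/100) / 4 ^ r := by
    rw [le_div_iff₀ (by positivity : (0:ℝ) < 4 ^ r), ← mul_pow]
    calc (Real.exp (-6) * 4) ^ r ≤ (1/100:ℝ) ^ r := by
          apply pow_le_pow_left₀ (by positivity) hsmall
      _ ≤ (1/100:ℝ) ^ 1 := pow_le_pow_of_le_one (by norm_num) (by norm_num) hr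
      _ = 1/100 := pow_one _
  have hδ6 : δ ^ 6 ≤ δ := by
    calc δ ^ 6 ≤ δ ^ 1 := pow_le_pow_of_le_one hδ0.le hδ1.le (by norm_num)
      _ = δ := pow_one δ
  have hfinal : M ≤ (1/100) * δ / 4 ^ r := by
    calc M ≤ Real.exp (-6) ^ r * δ ^ 6 := hMle
      _ ≤ Real.exp (-6) ^ r * δ := by
          exact mul_le_mul_of_nonneg_left hδ6 (by positivity)
      _ ≤ ((1/100) / 4 ^ r) * δ := mul_le_mul_of_nonneg_right hpow hδ0.le
      _ = (1/100) * δ / 4 ^ r := by ring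
  -- put everything together
  have hsub : {ω | ∑ i, X i ω < (q : ℝ) / 2} ⊆ {ω | (∑ i, X i) ω ≤ (q : ℝ) / 2} := by
    intro ω hω
    simp only [Set.mem_setOf_eq, Finset.sum_apply] at *
    exact hω.le
  calc μ {ω | ∑ i, X i ω < (q : ℝ) / 2}
      ≤ μ {ω | (∑ i, X i) ω ≤ (q : ℝ) / 2} := measure_mono hsub
    _ ≤ ENNReal.ofReal ((1 / 100) * δ / 4 ^ r) := by
        rw [ENNReal.le_ofReal_iff_toReal_le (measure_ne_top μ _) (by positivity)]
        exact hcher.trans (hLM.trans hfinal)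
end

section
/- Let ε be a real number with 0 < ε ≤ 1/2, let δ ∈ (0, 1), let r ≥ 1 be a natural number, and let q be a natural number with q ≥ (4/ε²) · (r + ln(1/δ)). Let Y_1, …, Y_q be i.i.d. Bernoulli(1/2 − ε) random variables. Then Pr[ Σ_{i=1}^q Y_i ≥ q/2 ] ≤ (1/100) · δ / 4^r. -/
open MeasureTheory ProbabilityTheory
open scoped ENNReal

/-- For `0 < ε ≤ 1/2`, `δ ∈ (0,1)`, `r ≥ 1`,
`q ≥ (4/ε²)·(r + ln(1/δ))`, and i.i.d. `Bernoulli(1/2 - ε)` random variables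
`Y_1, …, Y_q`, the probability that their sum is at least `q/2` is at most
`(1/100)·δ/4^r`. -/
theorem elimination_round_nonmis_vertex_survives
    (Ω : Type*) [MeasurableSpace Ω] (μ : Measure Ω) [IsProbabilityMeasure μ]
    (ε : ℝ) (hε0 : 0 < ε) (hε : ε ≤ 1 / 2)
    (δ : ℝ) (hδ0 : 0 < δ) (hδ1 : δ < 1)
    (r : ℕ) (hr : 1 ≤ r)
    (q : ℕ) (hq : (4 / ε ^ 2) * (r + Real.log (1 / δ)) ≤ (q : ℝ))
    (Y : Fin q → Ω → ℝ)
    (hmeas : ∀ i, Measurable (Y i))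
    (h01 : ∀ i ω, Y i ω = 0 ∨ Y i ω = 1)
    (hBer : ∀ i, μ {ω | Y i ω = 1} = ENNReal.ofReal (1 / 2 - ε))
    (hind : iIndepFun Y μ) :
    μ {ω | (q : ℝ) / 2 ≤ ∑ i, Y i ω}
      ≤ ENNReal.ofReal ((1 / 100) * δ / 4 ^ r) := by
  have hL : 0 < Real.log (1 / δ) := Real.log_pos (by rw [lt_div_iff₀ hδ0]; linarith)
  have hr' : (1 : ℝ) ≤ (r : ℝ) := by exact_mod_cast hr
  have hRpos : 0 < (1 / 100 : ℝ) * δ / 4 ^ r := by positivity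
  have hrl : (0 : ℝ) < (r : ℝ) + Real.log (1 / δ) := by linarith
  have hq0 : (0 : ℝ) < (q : ℝ) :=
    lt_of_lt_of_le (mul_pos (by positivity) hrl) hq
  rcases eq_or_lt_of_le hε with hhalf | hεlt
  · -- degenerate case ε = 1/2 : each Yᵢ is a.s. 0
    have hz : ∀ i, μ {ω | Y i ω = 1} = 0 := by
      intro i
      rw [hBer i, ← hhalf]
      simp
    have hsub : {ω | (q : ℝ) / 2 ≤ ∑ i, Y i ω} ⊆ ⋃ i, {ω | Y i ω = 1} := by
      intro ω hω
      simp only [Set.mem_setOf_eq] at hω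
      by_contra hc
      simp only [Set.mem_iUnion, Set.mem_setOf_eq, not_exists] at hc
      have h0 : ∀ i, Y i ω = 0 := fun i => (h01 i ω).resolve_right (hc i)
      rw [Finset.sum_congr rfl (fun i _ => h0 i)] at hω
      simp only [Finset.sum_const_zero] at hω
      linarith
    calc μ {ω | (q : ℝ) / 2 ≤ ∑ i, Y i ω}
        ≤ μ (⋃ i, {ω | Y i ω = 1}) := measure_mono hsub
      _ = 0 := measure_iUnion_null hz
      _ ≤ _ := zero_le
  · -- main case : ε < 1/2, Chernoff bound
    have h2ε : (0 : ℝ) < 1 - 2 * ε := by linarith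
    have h2e : (0 : ℝ) < 1 + 2 * ε := by linarith
    set t := Real.log ((1 + 2 * ε) / (1 - 2 * ε)) with htdef
    have ht0 : 0 ≤ t := Real.log_nonneg ((one_le_div h2ε).mpr (by linarith))
    have hexp_t : Real.exp t = (1 + 2 * ε) / (1 - 2 * ε) :=
      Real.exp_log (by positivity)
    -- integrability of each Yᵢ
    have hYint : ∀ i, Integrable (Y i) μ := by
      intro i
      refine Integrable.mono' (integrable_const 1) (hmeas i).aestronglyMeasurable
        (ae_of_all _ fun ω => ?_)
      rcases h01 i ω with h | h <;> simp [h]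
    -- expectation of each Yᵢ
    have hEY : ∀ i, ∫ ω, Y i ω ∂μ = 1 / 2 - ε := by
      intro i
      have hset : MeasurableSet {ω | Y i ω = 1} := (hmeas i) (measurableSet_singleton 1)
      have hind1 : (fun ω => Y i ω)
          = Set.indicator {ω | Y i ω = 1} (fun _ => (1 : ℝ)) := by
        funext ω
        rcases h01 i ω with h | h
        · rw [h, Set.indicator_apply, if_neg]
          simp only [Set.mem_setOf_eq, h]
          norm_num
        · rw [h, Set.indicator_apply, if_pos]
          simpa [Set.mem_setOf_eq] using h
      rw [hind1, integral_indicator_const (1 : ℝ) hset, measureReal_def, hBer i,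
        ENNReal.toReal_ofReal (by linarith), smul_eq_mul, mul_one]
    -- mgf of each Yᵢ
    have hmgf : ∀ i, mgf (Y i) μ t = 1 + 2 * ε := by
      intro i
      have hptw : (fun ω => Real.exp (t * Y i ω))
          = fun ω => 1 + (Real.exp t - 1) * Y i ω := by
        funext ω
        rcases h01 i ω with h | h
        · rw [h]; simp
        · rw [h, mul_one, mul_one]; ring
      simp only [mgf, hptw]
      rw [integral_add (integrable_const 1) ((hYint i).const_mul _),
        integral_const, integral_const_mul, hEY i, probReal_univ, smul_eq_mul]
      rw [hexp_t]
      field_simp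
      ring
    -- mgf of the sum
    have hSmgf : mgf (∑ i, Y i) μ t = (1 + 2 * ε) ^ q := by
      rw [hind.mgf_sum hmeas Finset.univ]
      simp [hmgf, Finset.prod_const]
    -- integrability of exp (t * S)
    have hSmeas : Measurable (∑ i, Y i) := by
      have h : (∑ i, Y i) = fun ω => ∑ i, Y i ω := by
        funext ω; exact Finset.sum_apply _ _ _
      rw [h]; exact Finset.measurable_sum _ fun i _ => hmeas i
    have hSle : ∀ ω, (∑ i, Y i) ω ≤ (q : ℝ) := by
      intro ω
      rw [Finset.sum_apply]
      calc ∑ i, Y i ω ≤ ∑ _i : Fin q, (1 : ℝ) :=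
            Finset.sum_le_sum fun i _ => by rcases h01 i ω with h | h <;> simp [h]
        _ = q := by simp
    have hintS : Integrable (fun ω => Real.exp (t * (∑ i, Y i) ω)) μ := by
      refine Integrable.mono' (integrable_const (Real.exp (t * q)))
        ((hSmeas.const_mul t).exp.aestronglyMeasurable) (ae_of_all _ fun ω => ?_)
      rw [Real.norm_eq_abs, abs_of_nonneg (Real.exp_pos _).le]
      exact Real.exp_le_exp.mpr (mul_le_mul_of_nonneg_left (hSle ω) ht0)
    -- Chernoff bound
    have hch := measure_ge_le_exp_mul_mgf (X := ∑ i, Y i) (μ := μ) ((q : ℝ) / 2) ht0 hintS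
    rw [hSmgf] at hch
    -- the numeric estimate
    have key : Real.exp (-t * ((q : ℝ) / 2)) * (1 + 2 * ε) ^ q
        ≤ 1 / 100 * δ / 4 ^ r := by
      have hpow : ((1 : ℝ) + 2 * ε) ^ q = Real.exp (q * Real.log (1 + 2 * ε)) := by
        rw [Real.exp_nat_mul, Real.exp_log h2e]
      rw [hpow, ← Real.exp_add,
        show (1 / 100 : ℝ) * δ / 4 ^ r = Real.exp (Real.log (1 / 100 * δ / 4 ^ r)) from
          (Real.exp_log hRpos).symm]
      apply Real.exp_le_exp.mpr
      -- key log computations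
      have htsplit : t = Real.log (1 + 2 * ε) - Real.log (1 - 2 * ε) :=
        Real.log_div h2e.ne' h2ε.ne'
      have hmul : Real.log (1 + 2 * ε) + Real.log (1 - 2 * ε)
          = Real.log (1 - 4 * ε ^ 2) := by
        rw [← Real.log_mul h2e.ne' h2ε.ne']
        congr 1
        ring
      have hlog14 : Real.log (1 - 4 * ε ^ 2) ≤ -(4 * ε ^ 2) := by
        have h := Real.log_le_sub_one_of_pos (x := 1 - 4 * ε ^ 2) (by nlinarith)
        linarith
      have hc : Real.log (1 + 2 * ε) - t / 2 ≤ -(2 * ε ^ 2) := by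
        rw [htsplit]
        linarith
      have hqe : 4 * ((r : ℝ) + Real.log (1 / δ)) ≤ (q : ℝ) * ε ^ 2 := by
        rw [div_mul_eq_mul_div, div_le_iff₀ (by positivity : (0 : ℝ) < ε ^ 2)] at hq
        linarith
      have hqc : (q : ℝ) * (Real.log (1 + 2 * ε) - t / 2)
          ≤ (q : ℝ) * (-(2 * ε ^ 2)) :=
        mul_le_mul_of_nonneg_left hc hq0.le
      -- log of the RHS
      have hlogR : Real.log (1 / 100 * δ / 4 ^ r)
          = -Real.log 100 + Real.log δ - r * Real.log 4 := by
        rw [Real.log_div (by positivity) (by positivity),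
          Real.log_mul (by norm_num) hδ0.ne', Real.log_pow, one_div,
          Real.log_inv]
      have hlogδ : Real.log (1 / δ) = -Real.log δ := by
        rw [one_div, Real.log_inv]
      have h100 : Real.log 100 ≤ 5 := by
        rw [Real.log_le_iff_le_exp (by norm_num)]
        have h1 : (2.7182818283 : ℝ) ≤ Real.exp 1 := Real.exp_one_gt_d9.le
        have h5 : Real.exp (5 : ℝ) = Real.exp 1 ^ 5 := by
          rw [← Real.exp_nat_mul]; norm_num
        have hp5 := pow_le_pow_left₀ (by norm_num : (0:ℝ) ≤ 2.7182818283) h1 5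
        rw [h5]
        calc (100 : ℝ) ≤ 2.7182818283 ^ 5 := by norm_num
          _ ≤ Real.exp 1 ^ 5 := hp5
      have h4 : Real.log 4 ≤ 3 := by
        have := Real.log_le_sub_one_of_pos (x := (4:ℝ)) (by norm_num)
        linarith
      have hr4 : (r : ℝ) * Real.log 4 ≤ (r : ℝ) * 3 :=
        mul_le_mul_of_nonneg_left h4 (by positivity)
      rw [hlogR]
      rw [hlogδ] at hqe hL
      nlinarith [hqc, hqe, hr4, hL, hr']
    calc μ {ω | (q : ℝ) / 2 ≤ ∑ i, Y i ω}
        = μ {ω | (q : ℝ) / 2 ≤ (∑ i, Y i) ω} := by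
          congr 1
          ext ω
          simp [Finset.sum_apply]
      _ = ENNReal.ofReal ((μ {ω | (q : ℝ) / 2 ≤ (∑ i, Y i) ω}).toReal) :=
          (ENNReal.ofReal_toReal (measure_ne_top μ _)).symm
      _ ≤ ENNReal.ofReal (Real.exp (-t * ((q : ℝ) / 2)) * (1 + 2 * ε) ^ q) :=
          ENNReal.ofReal_le_ofReal hch
      _ ≤ ENNReal.ofReal ((1 / 100) * δ / 4 ^ r) := ENNReal.ofReal_le_ofReal key
end

section
/- Let n be a positive natural number, let α ∈ (0, 1) and δ ∈ (0, 1), and let B be a finite set with |B| ≤ n. Let r̃ ≥ 1 be a natural number with 4^{r̃} ≥ 4/α. Let (Z_{v,i}), for v ∈ B and i ∈ {1, …, r̃}, be a mutually independent family of {0,1}-valued random variables with Pr[Z_{v,i} = 1] ≤ δ/(100 · 4^i) for every v and i. Say that v ∈ B survives if Z_{v,i} = 1 for every i ∈ {1, …, r̃}. Then Pr[ |{v ∈ B : v survives}| > α·n/100 ] ≤ δ/4. -/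
open MeasureTheory ProbabilityTheory Finset
open scoped ENNReal Classical

/-- Abstract form of part (i) of Lemma 4.3: `B` is a set of at most
`n` vertices, `Z v i` indicates that `v` survives round `i` (here round `i` is encoded
by the index `i : Fin r̃` and corresponds to round `i + 1 ∈ {1, …, r̃}`), each survival
indicator equals `1` with probability at most `δ/(100·4^{i+1})`, the whole family is
mutually independent, and `4^{r̃} ≥ 4/α`.  Then with probability at least `1 - δ/4`,
at most `α·n/100` elements of `B` survive all `r̃` rounds. -/
theorem few_nonmis_vertices_survive_elimination
    (Ω : Type*) [MeasurableSpace Ω] (μ : Measure Ω) [IsProbabilityMeasure μ]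
    (ι : Type*) (B : Finset ι)
    (n : ℕ) (hn : 0 < n) (hB : B.card ≤ n)
    (α δ : ℝ) (hα0 : 0 < α) (hα1 : α < 1) (hδ0 : 0 < δ) (hδ1 : δ < 1)
    (rt : ℕ) (hrt : 1 ≤ rt) (hrt4 : 4 / α ≤ (4 : ℝ) ^ rt)
    (Z : B → Fin rt → Ω → ℝ)
    (hmeas : ∀ v i, Measurable (Z v i))
    (h01 : ∀ v i ω, Z v i ω = 0 ∨ Z v i ω = 1)
    (hprob : ∀ v i, μ {ω | Z v i ω = 1}
      ≤ ENNReal.ofReal (δ / (100 * 4 ^ ((i : ℕ) + 1))))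
    (hind : iIndepFun (fun p : B × Fin rt => Z p.1 p.2) μ) :
    μ {ω | α * n / 100
        < ((Finset.univ.filter (fun v : B => ∀ i, Z v i ω = 1)).card : ℝ)}
      ≤ ENNReal.ofReal (δ / 4) := by
  classical
  set c : ℝ := α * n / 100 with hc
  have hcpos : 0 < c := by
    have : (0:ℝ) < n := by exact_mod_cast hn
    positivity
  -- survival sets
  set S : B → Set Ω := fun v => {ω | ∀ i, Z v i ω = 1} with hSdef
  have hS : ∀ v, MeasurableSet (S v) := by
    intro v
    have : S v = ⋂ i, Z v i ⁻¹' {1} := by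
      ext ω; simp [hSdef, Set.mem_iInter]
    rw [this]
    exact MeasurableSet.iInter fun i => hmeas v i (measurableSet_singleton 1)
  -- the counting function
  set f : Ω → ℝ≥0∞ := fun ω => ∑ v : B, (S v).indicator (fun _ => (1:ℝ≥0∞)) ω with hf
  have hfmeas : Measurable f := by
    apply Finset.measurable_sum
    intro v _
    exact Measurable.indicator measurable_const (hS v)
  have hfeq : ∀ ω, f ω =
      ((Finset.univ.filter (fun v : B => ∀ i, Z v i ω = 1)).card : ℝ≥0∞) := by
    intro ω
    simp only [hf, Set.indicator_apply, hSdef, Set.mem_setOf_eq]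
    rw [Finset.sum_boole]
  -- last round
  have hrtpos : 0 < rt := hrt
  set last : Fin rt := ⟨rt - 1, by omega⟩ with hlast
  have hlastval : (last : ℕ) + 1 = rt := by
    have : (last : ℕ) = rt - 1 := rfl
    omega
  -- survival probability bound
  have hbound : ∀ v, μ (S v) ≤ ENNReal.ofReal (α * δ / 400) := by
    intro v
    have hsub : S v ⊆ {ω | Z v last ω = 1} := fun ω h => h last
    have h1 : μ (S v) ≤ ENNReal.ofReal (δ / (100 * 4 ^ rt)) := by
      refine le_trans (measure_mono hsub) ?_
      have := hprob v last
      rwa [hlastval] at this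
    refine le_trans h1 (ENNReal.ofReal_le_ofReal ?_)
    have h4 : (0:ℝ) < (4:ℝ) ^ rt := by positivity
    rw [div_le_div_iff₀ (by positivity) (by norm_num)]
    -- δ * 400 ≤ α*δ * (100 * 4^rt)
    have : 4 ≤ α * 4 ^ rt := by
      have := (div_le_iff₀ hα0).mp hrt4
      linarith [this]
    nlinarith [hδ0.le, this]
  -- expectation bound
  have hint : ∫⁻ ω, f ω ∂μ ≤ ENNReal.ofReal c * ENNReal.ofReal (δ / 4) := by
    have h1 : ∫⁻ ω, f ω ∂μ = ∑ v : B, μ (S v) := by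
      rw [hf]
      rw [lintegral_finset_sum _ (fun v _ => Measurable.indicator measurable_const (hS v))]
      congr 1
      ext v
      rw [lintegral_indicator_const (hS v), one_mul]
    rw [h1]
    calc ∑ v : B, μ (S v) ≤ ∑ _v : B, ENNReal.ofReal (α * δ / 400) :=
          Finset.sum_le_sum fun v _ => hbound v
      _ = (B.card : ℝ≥0∞) * ENNReal.ofReal (α * δ / 400) := by
          simp [Finset.sum_const, mul_comm]
      _ ≤ (n : ℝ≥0∞) * ENNReal.ofReal (α * δ / 400) := by
          gcongr
      _ = ENNReal.ofReal c * ENNReal.ofReal (δ / 4) := by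
          rw [← ENNReal.ofReal_natCast n, ← ENNReal.ofReal_mul (by positivity),
            ← ENNReal.ofReal_mul (by positivity)]
          congr 1
          rw [hc]; ring
  -- Markov
  have hsub2 : {ω | c < ((Finset.univ.filter (fun v : B => ∀ i, Z v i ω = 1)).card : ℝ)}
      ⊆ {ω | ENNReal.ofReal c ≤ f ω} := by
    intro ω hω
    simp only [Set.mem_setOf_eq] at hω ⊢
    rw [hfeq ω]
    calc ENNReal.ofReal c
        ≤ ENNReal.ofReal ((Finset.univ.filter (fun v : B => ∀ i, Z v i ω = 1)).card : ℝ) :=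
          ENNReal.ofReal_le_ofReal hω.le
      _ = _ := ENNReal.ofReal_natCast _
  have hmarkov := mul_meas_ge_le_lintegral₀ (μ := μ) hfmeas.aemeasurable (ENNReal.ofReal c)
  have key : ENNReal.ofReal c *
      μ {ω | c < ((Finset.univ.filter (fun v : B => ∀ i, Z v i ω = 1)).card : ℝ)}
      ≤ ENNReal.ofReal c * ENNReal.ofReal (δ / 4) := by
    calc ENNReal.ofReal c *
        μ {ω | c < ((Finset.univ.filter (fun v : B => ∀ i, Z v i ω = 1)).card : ℝ)}
        ≤ ENNReal.ofReal c * μ {ω | ENNReal.ofReal c ≤ f ω} := by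
          exact mul_le_mul_right (measure_mono hsub2) _
      _ ≤ ∫⁻ ω, f ω ∂μ := hmarkov
      _ ≤ _ := hint
  have hc0 : ENNReal.ofReal c ≠ 0 := by
    simp [ENNReal.ofReal_eq_zero, not_le, hcpos]
  exact (ENNReal.mul_le_mul_iff_right hc0 ENNReal.ofReal_ne_top).mp key
end

section
/- Let n be a positive natural number, let ε > 0, let δ ∈ (0, 1), and let B be a finite set with |B| ≤ n. Let r̃ ≥ 1 be a natural number and let (Z_{v,i}), for v ∈ B and i ∈ {1, …, r̃}, be a mutually independent family of {0,1}-valued random variables with Pr[Z_{v,i} = 1] ≤ δ/(100 · 4^i) for every v and i. For i ∈ {1, …, r̃} set q_i = (4/ε²)·(i + ln(1/δ)), and define the random variable X = Σ_{v ∈ B} Σ_{i=1}^{r̃} q_i · 1[Z_{v,j} = 1 for all j ∈ {1, …, i}]. Then E[X] ≤ (δ·n/(25·ε²)) · (1 + ln(1/δ)). -/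
open MeasureTheory ProbabilityTheory Finset
open scoped ENNReal Classical

lemma geom_sum_aux (L : ℝ) (hL : 0 ≤ L) (m : ℕ) :
    ∑ i ∈ Finset.range m, (((i : ℝ) + 1) + L) / 4 ^ (i + 1) ≤ 1 + L := by
  have key : ∀ m : ℕ, ∑ i ∈ Finset.range m, (((i : ℝ) + 1) + L) / 4 ^ (i + 1)
      = 4/9 + L/3 - ((m : ℝ)/3 + 4/9 + L/3) / 4 ^ m := by
    intro m
    induction m with
    | zero => simp
    | succ k ih =>
      rw [Finset.sum_range_succ, ih]
      have h4 : (0:ℝ) < 4 ^ k := by positivity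
      push_cast
      field_simp
      ring
  rw [key]
  have h4 : (0:ℝ) < 4 ^ m := by positivity
  have h0 : 0 ≤ ((m : ℝ)/3 + 4/9 + L/3) / 4 ^ m := by positivity
  nlinarith

/-- Abstract form of the non-MIS part of Lemma 4.3(iii): `B` is a set
of at most `n` vertices, `Z v i` indicates that `v` survives round `i` (the index
`i : Fin r̃` stands for round `i + 1 ∈ {1, …, r̃}`), each survival indicator equals `1`
with probability at most `δ/(100·4^{i+1})`, and the whole family is mutually
independent.  With `q_i = (4/ε²)·(i + ln(1/δ))` queries per vertex surviving through
round `i`, the expected total number of queries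
`X = Σ_{v ∈ B} Σ_{i=1}^{r̃} q_i · 1[v survives rounds 1, …, i]` is at most
`(δ·n/(25·ε²))·(1 + ln(1/δ))`. -/
theorem expected_queries_on_nonmis_vertices
    (Ω : Type*) [MeasurableSpace Ω] (μ : Measure Ω) [IsProbabilityMeasure μ]
    (ι : Type*) (B : Finset ι)
    (n : ℕ) (hn : 0 < n) (hB : B.card ≤ n)
    (ε : ℝ) (hε0 : 0 < ε)
    (δ : ℝ) (hδ0 : 0 < δ) (hδ1 : δ < 1)
    (rt : ℕ) (hrt : 1 ≤ rt)
    (Z : B → Fin rt → Ω → ℝ)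
    (hmeas : ∀ v i, Measurable (Z v i))
    (h01 : ∀ v i ω, Z v i ω = 0 ∨ Z v i ω = 1)
    (hprob : ∀ v i, μ {ω | Z v i ω = 1}
      ≤ ENNReal.ofReal (δ / (100 * 4 ^ ((i : ℕ) + 1))))
    (hind : iIndepFun (fun p : B × Fin rt => Z p.1 p.2) μ) :
    ∫ ω, (∑ v : B, ∑ i : Fin rt,
        (4 / ε ^ 2) * (((i : ℕ) + 1 : ℝ) + Real.log (1 / δ)) *
          (if ∀ j : Fin rt, j ≤ i → Z v j ω = 1 then (1 : ℝ) else 0)) ∂μ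
      ≤ (δ * n / (25 * ε ^ 2)) * (1 + Real.log (1 / δ)) := by
  set L := Real.log (1 / δ) with hLdef
  have hL : 0 ≤ L := Real.log_nonneg (by rw [le_div_iff₀ hδ0]; linarith)
  have hε2 : (0:ℝ) < ε ^ 2 := by positivity
  have hSmeas : ∀ (v : B) (i : Fin rt),
      MeasurableSet {ω | ∀ j : Fin rt, j ≤ i → Z v j ω = 1} := by
    intro v i
    have : {ω | ∀ j : Fin rt, j ≤ i → Z v j ω = 1}
        = ⋂ j : Fin rt, ⋂ _ : j ≤ i, {ω | Z v j ω = 1} := by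
      ext ω; simp [Set.mem_iInter, Set.mem_setOf_eq]
    rw [this]
    exact MeasurableSet.iInter fun j => MeasurableSet.iInter fun _ =>
      (hmeas v j) (measurableSet_singleton 1)
  have hfun : ∀ (v : B) (i : Fin rt),
      (fun ω => (4 / ε ^ 2) * (((i : ℕ) + 1 : ℝ) + L) *
          (if ∀ j : Fin rt, j ≤ i → Z v j ω = 1 then (1 : ℝ) else 0))
        = Set.indicator {ω | ∀ j : Fin rt, j ≤ i → Z v j ω = 1}
            (fun _ => (4 / ε ^ 2) * (((i : ℕ) + 1 : ℝ) + L)) := by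
    intro v i
    ext ω
    by_cases h : ∀ j : Fin rt, j ≤ i → Z v j ω = 1 <;>
      simp [Set.indicator, Set.mem_setOf_eq, h]
  have hintg : ∀ (v : B) (i : Fin rt),
      Integrable (fun ω => (4 / ε ^ 2) * (((i : ℕ) + 1 : ℝ) + L) *
          (if ∀ j : Fin rt, j ≤ i → Z v j ω = 1 then (1 : ℝ) else 0)) μ := by
    intro v i
    rw [hfun v i]
    exact (integrable_const _).indicator (hSmeas v i)
  rw [integral_finset_sum _ (fun v _ => integrable_finset_sum _ (fun i _ => hintg v i))]
  have hterm : ∀ (v : B) (i : Fin rt),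
      ∫ ω, (4 / ε ^ 2) * (((i : ℕ) + 1 : ℝ) + L) *
          (if ∀ j : Fin rt, j ≤ i → Z v j ω = 1 then (1 : ℝ) else 0) ∂μ
        ≤ (4 / ε ^ 2) * (((i : ℕ) + 1 : ℝ) + L) * (δ / (100 * 4 ^ ((i : ℕ) + 1))) := by
    intro v i
    have hc : 0 ≤ (4 / ε ^ 2) * (((i : ℕ) + 1 : ℝ) + L) := by
      apply mul_nonneg (by positivity)
      have : (0:ℝ) ≤ (i : ℕ) + 1 := by positivity
      linarith
    rw [hfun v i, integral_indicator_const _ (hSmeas v i), smul_eq_mul]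
    have hsub : {ω | ∀ j : Fin rt, j ≤ i → Z v j ω = 1} ⊆ {ω | Z v i ω = 1} :=
      fun ω h => h i le_rfl
    have h1 : μ {ω | ∀ j : Fin rt, j ≤ i → Z v j ω = 1}
        ≤ ENNReal.ofReal (δ / (100 * 4 ^ ((i : ℕ) + 1))) :=
      (measure_mono hsub).trans (hprob v i)
    have h2 : (μ {ω | ∀ j : Fin rt, j ≤ i → Z v j ω = 1}).toReal
        ≤ δ / (100 * 4 ^ ((i : ℕ) + 1)) := by
      have := ENNReal.toReal_mono (by simp) h1
      rwa [ENNReal.toReal_ofReal (by positivity)] at this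
    calc (μ {ω | ∀ j : Fin rt, j ≤ i → Z v j ω = 1}).toReal
          * ((4 / ε ^ 2) * (((i : ℕ) + 1 : ℝ) + L))
        = (4 / ε ^ 2) * (((i : ℕ) + 1 : ℝ) + L)
          * (μ {ω | ∀ j : Fin rt, j ≤ i → Z v j ω = 1}).toReal := by ring
      _ ≤ _ := mul_le_mul_of_nonneg_left h2 hc
  have hrow : ∀ v : B,
      ∫ ω, (∑ i : Fin rt, (4 / ε ^ 2) * (((i : ℕ) + 1 : ℝ) + L) *
          (if ∀ j : Fin rt, j ≤ i → Z v j ω = 1 then (1 : ℝ) else 0)) ∂μ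
        ≤ (δ / (25 * ε ^ 2)) * (1 + L) := by
    intro v
    rw [integral_finset_sum _ (fun i _ => hintg v i)]
    calc ∑ i : Fin rt, ∫ ω, (4 / ε ^ 2) * (((i : ℕ) + 1 : ℝ) + L) *
            (if ∀ j : Fin rt, j ≤ i → Z v j ω = 1 then (1 : ℝ) else 0) ∂μ
        ≤ ∑ i : Fin rt, (4 / ε ^ 2) * (((i : ℕ) + 1 : ℝ) + L)
            * (δ / (100 * 4 ^ ((i : ℕ) + 1))) :=
          Finset.sum_le_sum fun i _ => hterm v i
      _ = (4 * δ / (100 * ε ^ 2)) *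
            ∑ i ∈ Finset.range rt, (((i : ℝ) + 1) + L) / 4 ^ (i + 1) := by
          rw [Finset.mul_sum, Fin.sum_univ_eq_sum_range
            (fun i => (4 / ε ^ 2) * (((i : ℕ) + 1 : ℝ) + L) * (δ / (100 * 4 ^ (i + 1))))]
          refine Finset.sum_congr rfl fun i _ => ?_
          have h4 : (0:ℝ) < 4 ^ (i + 1) := by positivity
          field_simp
      _ ≤ (4 * δ / (100 * ε ^ 2)) * (1 + L) := by
          apply mul_le_mul_of_nonneg_left (geom_sum_aux L hL rt) (by positivity)
      _ = (δ / (25 * ε ^ 2)) * (1 + L) := by ring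
  calc ∑ v : B, ∫ ω, (∑ i : Fin rt, (4 / ε ^ 2) * (((i : ℕ) + 1 : ℝ) + L) *
          (if ∀ j : Fin rt, j ≤ i → Z v j ω = 1 then (1 : ℝ) else 0)) ∂μ
      ≤ ∑ _v : B, (δ / (25 * ε ^ 2)) * (1 + L) := Finset.sum_le_sum fun v _ => hrow v
    _ = (B.card : ℝ) * ((δ / (25 * ε ^ 2)) * (1 + L)) := by
        simp [Finset.sum_const, Finset.card_univ]
    _ ≤ (n : ℝ) * ((δ / (25 * ε ^ 2)) * (1 + L)) := by
        apply mul_le_mul_of_nonneg_right _ (by positivity)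
        exact_mod_cast hB
    _ = (δ * n / (25 * ε ^ 2)) * (1 + L) := by ring
end
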